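/- Let p ∈ [1/2, 1), q = 1 − p. For every dynamic environment ξ : ℕ × ℤ → {0,1}, every n ∈ ℕ and every c ∈ ℤ, the quenched walk is stochastically dominated by the homogeneous walk with right-step probability p: Σ_{m∈ℤ, m ≥ c} q_n^0(ξ, m) ≤ Σ_{j∈ℕ, 2j−n ≥ c} C(n, j)·p^j·q^{n−j}, where C(n, j) is the binomial coefficient. -/

import Mathlib

open Finset

/-- Position after `k` steps of the nearest-neighbor path started at `x`
with up/down steps given by `s`. -/
def pathPos (x : ℤ) {n : ℕ} (s : Fin n → Bool) (k : ℕ) : ℤ :=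
  x + ∑ i ∈ Finset.univ.filter (fun i : Fin n => (i : ℕ) < k), (if s i then (1 : ℤ) else -1)

/-- The quenched `n`-step transition probability `q_n^x(ξ, m)` of the random walk in the
dynamic environment `ξ : ℕ × ℤ → {0,1}` started at `x`. -/
noncomputable def quenchedProb (p : ℝ) (ξ : ℕ → ℤ → Bool) (n : ℕ) (x m : ℤ) : ℝ :=
  ∑ s ∈ Finset.univ.filter (fun s : Fin n → Bool => pathPos x s n = m),
    ∏ k : Fin n, (if ξ k (pathPos x s k) = s k then p else 1 - p)

lemma pathPos_zero (x : ℤ) {n : ℕ} (s : Fin n → Bool) : pathPos x s 0 = x := by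
  simp [pathPos]

lemma pathPos_last {n : ℕ} (x : ℤ) (s : Fin n → Bool) :
    pathPos x s n = x + ∑ i : Fin n, (if s i then (1 : ℤ) else -1) := by
  simp [pathPos, Finset.filter_true_of_mem (fun (i : Fin n) _ => i.isLt)]

lemma pathPos_cons {n : ℕ} (x : ℤ) (b : Bool) (s : Fin n → Bool) (k : ℕ) :
    pathPos x (Fin.cons b s) (k + 1) = pathPos (x + if b then 1 else -1) s k := by
  simp only [pathPos, Finset.sum_filter, Fin.sum_univ_succ, Fin.cons_zero, Fin.cons_succ,
    Fin.val_zero, Fin.val_succ, Nat.succ_lt_succ_iff, Nat.zero_lt_succ, if_true]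
  ring

/-- Backward recursion for the probability of ending `≥ c` after `n` more steps,
starting at time `t`, position `x`, with step weights `W`. -/
noncomputable def walkTail (W : ℕ → ℤ → Bool → ℝ) (c : ℤ) : ℕ → ℕ → ℤ → ℝ
  | 0, _, x => if c ≤ x then 1 else 0
  | (n+1), t, x => W t x true * walkTail W c n (t+1) (x+1)
      + W t x false * walkTail W c n (t+1) (x-1)

lemma walkTail_eq_sum (W : ℕ → ℤ → Bool → ℝ) (c : ℤ) :
    ∀ (n t : ℕ) (x : ℤ), walkTail W c n t x =
      ∑ s : Fin n → Bool,
        (∏ k : Fin n, W (t + k) (pathPos x s k) (s k)) *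
          (if c ≤ pathPos x s n then 1 else 0) := by
  intro n
  induction n with
  | zero =>
    intro t x
    simp [walkTail, pathPos_zero]
  | succ n ih =>
    intro t x
    rw [← (Fin.consEquiv (fun _ : Fin (n+1) => Bool)).sum_comp]
    rw [Fintype.sum_prod_type]
    rw [Fintype.sum_bool]
    have key : ∀ b : Bool, ∀ s : Fin n → Bool,
        (∏ k : Fin (n+1), W (t + k) (pathPos x (Fin.cons b s) k) ((Fin.cons b s : Fin (n+1) → Bool) k)) *
          (if c ≤ pathPos x (Fin.cons b s) (n+1) then 1 else 0)
        = W t x b * ((∏ k : Fin n,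
            W (t + 1 + k) (pathPos (x + if b then 1 else -1) s k) (s k)) *
          (if c ≤ pathPos (x + if b then 1 else -1) s n then 1 else 0)) := by
      intro b s
      rw [Fin.prod_univ_succ]
      simp only [Fin.cons_zero, Fin.cons_succ, Fin.val_zero, Fin.val_succ, pathPos_zero,
        pathPos_cons]
      rw [Nat.add_zero]
      have : ∀ k : Fin n, t + ((k : ℕ) + 1) = t + 1 + k := fun k => by omega
      simp only [this]
      ring
    have ce : ∀ (b : Bool) (s : Fin n → Bool),
        (Fin.consEquiv (fun _ : Fin (n+1) => Bool)) (b, s) = Fin.cons b s := fun _ _ => rfl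
    simp only [ce]
    simp only [key]
    rw [← Finset.mul_sum, ← Finset.mul_sum]
    rw [walkTail]
    rw [ih, ih, show x - (1:ℤ) = x + -1 from by ring]
    norm_num

section Dom

variable (p : ℝ) (c : ℤ)

/-- Homogeneous weights. -/
noncomputable def homW (p : ℝ) : ℕ → ℤ → Bool → ℝ := fun _ _ b => if b then p else 1 - p

/-- Environment weights. -/
noncomputable def envW (p : ℝ) (ξ : ℕ → ℤ → Bool) : ℕ → ℤ → Bool → ℝ :=
  fun t y b => if ξ t y = b then p else 1 - p

lemma homTail_nonneg (hp0 : 0 ≤ p) (hp1 : p ≤ 1) :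
    ∀ (n t : ℕ) (x : ℤ), 0 ≤ walkTail (homW p) c n t x := by
  intro n
  induction n with
  | zero => intro t x; simp only [walkTail]; positivity
  | succ n ih =>
    intro t x
    simp only [walkTail, homW, if_true, Bool.false_eq_true, if_false]
    have h1 := ih (t+1) (x+1)
    have h2 := ih (t+1) (x-1)
    nlinarith

lemma homTail_mono (hp0 : 0 ≤ p) (hp1 : p ≤ 1) :
    ∀ (n t : ℕ) (x y : ℤ), x ≤ y → walkTail (homW p) c n t x ≤ walkTail (homW p) c n t y := by
  intro n
  induction n with
  | zero =>
    intro t x y hxy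
    simp only [walkTail]
    split_ifs with h1 h2 <;> simp_all <;> omega
  | succ n ih =>
    intro t x y hxy
    simp only [walkTail, homW, if_true, Bool.false_eq_true, if_false]
    have h1 := ih (t+1) (x+1) (y+1) (by omega)
    have h2 := ih (t+1) (x-1) (y-1) (by omega)
    nlinarith

lemma envTail_le_homTail (hp : 1/2 ≤ p) (hp1 : p ≤ 1) (ξ : ℕ → ℤ → Bool) :
    ∀ (n t : ℕ) (x : ℤ), walkTail (envW p ξ) c n t x ≤ walkTail (homW p) c n t x := by
  have hp0 : (0:ℝ) ≤ p := by linarith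
  intro n
  induction n with
  | zero => intro t x; simp [walkTail]
  | succ n ih =>
    intro t x
    simp only [walkTail, homW, envW, if_true, Bool.false_eq_true, if_false]
    have h1 := ih (t+1) (x+1)
    have h2 := ih (t+1) (x-1)
    have hm := homTail_mono p c hp0 hp1 n (t+1) (x-1) (x+1) (by omega)
    have hn1 := homTail_nonneg p c hp0 hp1 n (t+1) (x+1)
    have hn2 := homTail_nonneg p c hp0 hp1 n (t+1) (x-1)
    cases h : ξ t x with
    | true =>
      simp only [h, if_true, Bool.true_eq_false, if_false]
      nlinarith
    | false =>
      simp only [h, Bool.false_eq_true, if_false, if_true]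
      nlinarith

end Dom

lemma pathPos_le (n : ℕ) (s : Fin n → Bool) : pathPos 0 s n ≤ n := by
  rw [pathPos_last, zero_add]
  calc ∑ i : Fin n, (if s i then (1:ℤ) else -1) ≤ ∑ _i : Fin n, (1:ℤ) := by
        apply Finset.sum_le_sum; intro i _; split_ifs <;> omega
    _ = n := by simp
lemma le_pathPos (n : ℕ) (s : Fin n → Bool) : -(n:ℤ) ≤ pathPos 0 s n := by
  rw [pathPos_last, zero_add]
  calc -(n:ℤ) = ∑ _i : Fin n, (-1:ℤ) := by simp
    _ ≤ ∑ i : Fin n, (if s i then (1:ℤ) else -1) := by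
        apply Finset.sum_le_sum; intro i _; split_ifs <;> omega

lemma pathPos_eq_two_mul (n : ℕ) (s : Fin n → Bool) :
    pathPos 0 s n =
      2 * ((Finset.univ.filter (fun i : Fin n => s i = true)).card : ℤ) - n := by
  rw [pathPos_last, zero_add, Finset.sum_ite, Finset.sum_const, Finset.sum_const]
  have h := Finset.card_filter_add_card_filter_not
    (s := (Finset.univ : Finset (Fin n))) (p := fun i => s i = true)
  simp only [Finset.card_univ, Fintype.card_fin] at h
  have h2 : (Finset.univ.filter (fun i : Fin n => ¬ s i = true)).card
      = n - (Finset.univ.filter (fun i : Fin n => s i = true)).card := by omega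
  have h3 : (Finset.univ.filter (fun i : Fin n => s i = true)).card ≤ n := by omega
  rw [h2]
  simp only [nsmul_eq_mul, mul_one, mul_neg_one]
  push_cast [h3]
  ring

lemma homTail_eq (p : ℝ) (c : ℤ) (n : ℕ) :
    walkTail (homW p) c n 0 0 = ∑ j ∈ Finset.range (n+1),
      if c ≤ 2*(j:ℤ) - n then (n.choose j : ℝ) * p ^ j * (1-p) ^ (n-j) else 0 := by
  classical
  rw [walkTail_eq_sum]
  set F : ℕ → ℝ := fun j => (if c ≤ 2*(j:ℤ) - n then 1 else 0) * (p ^ j * (1-p) ^ (n-j))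
    with hF
  have step1 : ∀ s : Fin n → Bool,
      (∏ k : Fin n, homW p (0+k) (pathPos 0 s k) (s k)) *
        (if c ≤ pathPos 0 s n then 1 else 0)
      = F ((Finset.univ.filter (fun i : Fin n => s i = true)).card) := by
    intro s
    have hT : (Finset.univ.filter (fun i : Fin n => s i = true)).card ≤ n := by
      simpa using Finset.card_filter_le Finset.univ (fun i : Fin n => s i = true)
    have hprod : (∏ k : Fin n, homW p (0+k) (pathPos 0 s k) (s k))
        = p ^ ((Finset.univ.filter (fun i : Fin n => s i = true)).card)
          * (1-p) ^ (n - (Finset.univ.filter (fun i : Fin n => s i = true)).card) := by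
      simp only [homW]
      rw [Finset.prod_ite, Finset.prod_const, Finset.prod_const]
      congr 1
      congr 1
      have h := Finset.card_filter_add_card_filter_not
        (s := (Finset.univ : Finset (Fin n))) (p := fun i => s i = true)
      simp only [Finset.card_univ, Fintype.card_fin] at h
      omega
    rw [hprod, pathPos_eq_two_mul, hF]
    ring
  rw [Finset.sum_congr rfl (fun s _ => step1 s)]
  have bij : ∑ s : Fin n → Bool, F ((Finset.univ.filter (fun i : Fin n => s i = true)).card)
      = ∑ A ∈ (Finset.univ : Finset (Fin n)).powerset, F A.card := by
    apply Finset.sum_nbij' (i := fun s : Fin n → Bool => Finset.univ.filter (fun i => s i = true))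
      (j := fun A : Finset (Fin n) => fun i => decide (i ∈ A))
    · intro s _; simp
    · intro A _; simp
    · intro s _
      funext i
      simp
    · intro A _
      ext i
      simp
    · intro s _; rfl
  rw [bij, Finset.sum_powerset]
  simp only [Finset.card_univ, Fintype.card_fin]
  apply Finset.sum_congr rfl
  intro j hj
  have : ∀ A ∈ Finset.powersetCard j (Finset.univ : Finset (Fin n)), F A.card = F j := by
    intro A hA
    rw [(Finset.mem_powersetCard.mp hA).2]
  rw [Finset.sum_congr rfl this, Finset.sum_const, Finset.card_powersetCard,
    Finset.card_univ, Fintype.card_fin, nsmul_eq_mul, hF]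
  by_cases h : c ≤ 2*(j:ℤ) - n
  · simp only [h, if_true]; ring
  · simp only [h, if_false]; ring


/-- For `p ∈ [1/2, 1)`, the quenched walk is stochastically dominated by the homogeneous
walk with right-step probability `p`:
`Σ_{m ≥ c} q_n^0(ξ, m) ≤ Σ_{j : 2j−n ≥ c} C(n,j) p^j q^{n−j}`. -/
theorem quenched_dominated_by_homogeneous (p : ℝ) (hp : 1 / 2 ≤ p) (hp1 : p < 1)
    (ξ : ℕ → ℤ → Bool) (n : ℕ) (c : ℤ) :
    (∑' m : ℤ, if c ≤ m then quenchedProb p ξ n 0 m else 0) ≤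
      ∑' j : ℕ, if c ≤ 2 * (j : ℤ) - n then (n.choose j : ℝ) * p ^ j * (1 - p) ^ (n - j)
        else 0 := by
  classical
  have hp1' : p ≤ 1 := le_of_lt hp1
  -- Right-hand side: reduce the tsum to a finite sum
  have hR : (∑' j : ℕ, if c ≤ 2 * (j : ℤ) - n then (n.choose j : ℝ) * p ^ j * (1 - p) ^ (n - j)
      else 0) = ∑ j ∈ Finset.range (n+1),
      if c ≤ 2 * (j : ℤ) - n then (n.choose j : ℝ) * p ^ j * (1 - p) ^ (n - j) else 0 := by
    apply tsum_eq_sum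
    intro j hj
    have : n < j := by simpa using hj
    rw [Nat.choose_eq_zero_of_lt this]
    simp
  -- Left-hand side: reduce the tsum to a finite sum
  have hL : (∑' m : ℤ, if c ≤ m then quenchedProb p ξ n 0 m else 0)
      = ∑ m ∈ Finset.Icc (-(n:ℤ)) n, (if c ≤ m then quenchedProb p ξ n 0 m else 0) := by
    apply tsum_eq_sum
    intro m hm
    simp only [Finset.mem_Icc, not_and_or, not_le] at hm
    have hempty : (Finset.univ.filter (fun s : Fin n → Bool => pathPos 0 s n = m)) = ∅ := by
      apply Finset.filter_eq_empty_iff.mpr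
      intro s _
      have h1 := pathPos_le n s
      have h2 := le_pathPos n s
      intro h; rw [h] at h1 h2; omega
    rw [quenchedProb, hempty]
    simp
  rw [hL, hR, ← homTail_eq]
  -- Left-hand side equals the environment walk recursion
  have hL2 : (∑ m ∈ Finset.Icc (-(n:ℤ)) n, (if c ≤ m then quenchedProb p ξ n 0 m else 0))
      = walkTail (envW p ξ) c n 0 0 := by
    rw [walkTail_eq_sum]
    rw [← Finset.sum_fiberwise_of_maps_to
      (g := fun s : Fin n → Bool => pathPos 0 s n) (t := Finset.Icc (-(n:ℤ)) n)
      (fun s _ => Finset.mem_Icc.mpr ⟨le_pathPos n s, pathPos_le n s⟩)]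
    apply Finset.sum_congr rfl
    intro m _
    by_cases hc : c ≤ m
    · rw [if_pos hc, quenchedProb]
      apply Finset.sum_congr rfl
      intro s hs
      have hm : pathPos 0 s n = m := (Finset.mem_filter.mp hs).2
      rw [hm, if_pos hc, mul_one]
      apply Finset.prod_congr rfl
      intro k _
      simp [envW]
    · rw [if_neg hc]
      symm
      apply Finset.sum_eq_zero
      intro s hs
      have hm : pathPos 0 s n = m := (Finset.mem_filter.mp hs).2
      rw [hm, if_neg hc, mul_zero]
  rw [hL2]
  exact envTail_le_homTail p c hp hp1' ξ n 0 0
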